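/- Consider FISTA with step η = 1 and momentum β = (1−√α)/(1+√α), initialized at x_{−1} = x₀ = 0, on the over-regularized objective F_{2ρ} = f + g_B, with α ∈ (0,1). Let S be a vertex set with S_B ⊆ S, let ∂S = {j ∉ S : j has a neighbor in S} be the vertex boundary of S, let Ext(S) = V ∖ (S ∪ ∂S), and let d_min∂S = min_{j∈∂S} d_j. Assume that for every i ∈ Ext(S): |N({i}) ∩ ∂S| / d_i ≤ (αρ/(2(1−α)))² · d_i · d_min∂S, where N({i}) is the neighbor set of i. Then for all k ≥ 0 the iterates satisfy supp(x_k) ⊆ S ∪ ∂S. -/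

import Mathlib

set_option maxHeartbeats 1000000


open Finset

noncomputable section

/-- Degree of vertex `i` in the (unweighted) graph with adjacency matrix `A`. -/
def deg {n : ℕ} (A : Matrix (Fin n) (Fin n) ℝ) (i : Fin n) : ℝ := ∑ j, A i j

/-- The PageRank matrix `Q = αI + ((1−α)/2)·𝓛 = ((1+α)/2)·I − ((1−α)/2)·D^{-1/2} A D^{-1/2}`. -/
def Qmat {n : ℕ} (A : Matrix (Fin n) (Fin n) ℝ) (α : ℝ) : Matrix (Fin n) (Fin n) ℝ :=
  fun i j => (if i = j then (1 + α) / 2 else 0)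
    - ((1 - α) / 2) * A i j / (Real.sqrt (deg A i) * Real.sqrt (deg A j))

/-- Smooth PageRank objective `f(x) = (1/2)⟨x, Qx⟩ − α⟨D^{-1/2} e_v, x⟩` with seed vertex `v`. -/
def fPR {n : ℕ} (A : Matrix (Fin n) (Fin n) ℝ) (α : ℝ) (v : Fin n) (x : Fin n → ℝ) : ℝ :=
  (1 / 2) * (∑ i, x i * (Qmat A α).mulVec x i) - α * (x v / Real.sqrt (deg A v))

/-- Gradient of `fPR`: `∇f(x) = Qx − α·D^{-1/2} e_v`. -/
def gradf {n : ℕ} (A : Matrix (Fin n) (Fin n) ℝ) (α : ℝ) (v : Fin n) (x : Fin n → ℝ) :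
    Fin n → ℝ :=
  fun i => (Qmat A α).mulVec x i - α * (if i = v then 1 / Real.sqrt (deg A v) else 0)

/-- Weighted ℓ1 norm `‖D^{1/2} x‖₁ = ∑ i, √(d i)·|x i|`. -/
def l1w {n : ℕ} (A : Matrix (Fin n) (Fin n) ℝ) (x : Fin n → ℝ) : ℝ :=
  ∑ i, Real.sqrt (deg A i) * |x i|

/-- ℓ1-regularized PageRank objective `F_ρ(x) = f(x) + αρ‖D^{1/2}x‖₁`. -/
def Freg {n : ℕ} (A : Matrix (Fin n) (Fin n) ℝ) (α : ℝ) (v : Fin n) (ρ : ℝ)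
    (x : Fin n → ℝ) : ℝ :=
  fPR A α v x + α * ρ * l1w A x

/-- Coordinatewise soft-thresholding at levels `t·√(d i)`: this is the proximal map
`prox_{ηg}` of `g(x) = cαρ‖D^{1/2}x‖₁` with `t = η·c·α·ρ`. -/
def softT {n : ℕ} (A : Matrix (Fin n) (Fin n) ℝ) (t : ℝ) (w : Fin n → ℝ) : Fin n → ℝ :=
  fun i => Real.sign (w i) * max (|w i| - t * Real.sqrt (deg A i)) 0

/-- Euclidean norm on `Fin n → ℝ`. -/
def enorm {n : ℕ} (x : Fin n → ℝ) : ℝ := Real.sqrt (∑ i, (x i) ^ 2)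

open Classical in
/-- Degree-weighted volume of a vertex set: `vol(S) = ∑_{i ∈ S} d i`. -/
def volS {n : ℕ} (A : Matrix (Fin n) (Fin n) ℝ) (S : Set (Fin n)) : ℝ :=
  ∑ i ∈ Finset.univ.filter (fun i => i ∈ S), deg A i

/-- Neighbor set of a vertex. -/
def nbr {n : ℕ} (A : Matrix (Fin n) (Fin n) ℝ) (i : Fin n) : Set (Fin n) := {j | A i j ≠ 0}

/-- Vertex boundary of `S`: vertices outside `S` with a neighbor in `S`. -/
def bdry {n : ℕ} (A : Matrix (Fin n) (Fin n) ℝ) (S : Set (Fin n)) : Set (Fin n) :=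
  {j | j ∉ S ∧ ∃ i ∈ S, A j i ≠ 0}

/-- `A` is the adjacency matrix of a finite undirected unweighted loopless graph
with all degrees positive. -/
structure IsGraph {n : ℕ} (A : Matrix (Fin n) (Fin n) ℝ) : Prop where
  symm : ∀ i j, A i j = A j i
  zero_one : ∀ i j, A i j = 0 ∨ A i j = 1
  loopless : ∀ i, A i i = 0
  deg_pos : ∀ i, 0 < deg A i

namespace FBC

variable {n : ℕ}

def ip (a b : Fin n → ℝ) : ℝ := ∑ i, a i * b i
def sq2 (a : Fin n → ℝ) : ℝ := ∑ i, (a i) ^ 2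

lemma sq2_nonneg (a : Fin n → ℝ) : 0 ≤ sq2 a := Finset.sum_nonneg fun _ _ => sq_nonneg _

lemma enorm_nonneg (a : Fin n → ℝ) : 0 ≤ _root_.enorm a := Real.sqrt_nonneg _

lemma enorm_sq (a : Fin n → ℝ) : _root_.enorm a ^ 2 = sq2 a := Real.sq_sqrt (sq2_nonneg a)

lemma ip_le (a b : Fin n → ℝ) : ip a b ≤ _root_.enorm a * _root_.enorm b :=
  Real.sum_mul_le_sqrt_mul_sqrt _ a b

lemma abs_coord_le (a : Fin n → ℝ) (i : Fin n) : |a i| ≤ _root_.enorm a := by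
  have h1 : (a i) ^ 2 ≤ sq2 a :=
    Finset.single_le_sum (fun j _ => sq_nonneg (a j)) (Finset.mem_univ i)
  have := Real.sqrt_le_sqrt h1
  rwa [Real.sqrt_sq_eq_abs] at this

lemma enorm_triangle (a b : Fin n → ℝ) :
    _root_.enorm (fun i => a i + b i) ≤ _root_.enorm a + _root_.enorm b := by
  have hexp : sq2 (fun i => a i + b i) = sq2 a + 2 * ip a b + sq2 b := by
    simp only [sq2, ip, ← Finset.sum_add_distrib, Finset.mul_sum]
    exact Finset.sum_congr rfl fun i _ => by ring
  have h1 : sq2 (fun i => a i + b i) ≤ (_root_.enorm a + _root_.enorm b) ^ 2 := by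
    have := ip_le a b
    have := enorm_sq a; have := enorm_sq b
    nlinarith
  have := Real.sqrt_le_sqrt h1
  rwa [Real.sqrt_sq (add_nonneg (enorm_nonneg a) (enorm_nonneg b))] at this

lemma enorm_smul (c : ℝ) (hc : 0 ≤ c) (a : Fin n → ℝ) :
    _root_.enorm (fun i => c * a i) = c * _root_.enorm a := by
  have : (∑ i, (c * a i) ^ 2) = c ^ 2 * ∑ i, (a i) ^ 2 := by
    rw [Finset.mul_sum]; exact Finset.sum_congr rfl fun i _ => by ring
  rw [_root_.enorm, this, Real.sqrt_mul (sq_nonneg c), Real.sqrt_sq hc, _root_.enorm]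

variable {A : Matrix (Fin n) (Fin n) ℝ}

lemma A_nonneg (hG : IsGraph A) (i j : Fin n) : 0 ≤ A i j := by
  rcases hG.zero_one i j with h | h <;> rw [h] <;> norm_num

lemma deg_one_le (hG : IsGraph A) (i : Fin n) : 1 ≤ deg A i := by
  by_cases h : ∀ j, A i j = 0
  · exfalso
    have : deg A i = 0 := Finset.sum_eq_zero fun j _ => h j
    have := hG.deg_pos i; linarith
  · push_neg at h
    obtain ⟨j, hj⟩ := h
    have h1 : A i j = 1 := (hG.zero_one i j).resolve_left hj
    calc (1 : ℝ) = A i j := h1.symm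
      _ ≤ deg A i := Finset.single_le_sum (fun k _ => A_nonneg hG i k) (Finset.mem_univ j)

lemma sqrt_deg_pos (hG : IsGraph A) (i : Fin n) : 0 < Real.sqrt (deg A i) :=
  Real.sqrt_pos.2 (hG.deg_pos i)

lemma one_le_sqrt_deg (hG : IsGraph A) (i : Fin n) : 1 ≤ Real.sqrt (deg A i) := by
  have := Real.sqrt_le_sqrt (deg_one_le hG i)
  simpa using this

lemma sq_sqrt_deg (hG : IsGraph A) (i : Fin n) :
    Real.sqrt (deg A i) ^ 2 = deg A i := Real.sq_sqrt (hG.deg_pos i).le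

lemma Q_symm (hG : IsGraph A) (α : ℝ) (i j : Fin n) : Qmat A α i j = Qmat A α j i := by
  unfold Qmat
  rw [hG.symm i j, mul_comm (Real.sqrt (deg A i))]
  congr 1
  simp [eq_comm]

lemma colsum (hG : IsGraph A) (j : Fin n) : ∑ i, A i j = deg A j := by
  unfold deg; exact Finset.sum_congr rfl fun i _ => hG.symm i j

lemma mulVec_Q (α : ℝ) (u : Fin n → ℝ) (i : Fin n) :
    (Qmat A α).mulVec u i = (1 + α) / 2 * u i
      - (1 - α) / 2 * ∑ j, A i j * u j / (Real.sqrt (deg A i) * Real.sqrt (deg A j)) := by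
  simp only [Matrix.mulVec, dotProduct, Qmat, sub_mul, Finset.sum_sub_distrib, ite_mul,
    zero_mul, Finset.sum_ite_eq, Finset.mem_univ, if_true]
  congr 1
  rw [Finset.mul_sum]
  exact Finset.sum_congr rfl fun j _ => by ring

/-- The bilinear double sum. -/
def dS (α : ℝ) (A : Matrix (Fin n) (Fin n) ℝ) (a b : Fin n → ℝ) : ℝ :=
  ∑ i, ∑ j, a i * Qmat A α i j * b j

lemma ip_mulVec (α : ℝ) (a b : Fin n → ℝ) :
    ip a ((Qmat A α).mulVec b) = dS α A a b := by
  unfold ip dS Matrix.mulVec dotProduct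
  exact Finset.sum_congr rfl fun i _ => by
    rw [Finset.mul_sum]; exact Finset.sum_congr rfl fun j _ => by ring

lemma dS_swap (hG : IsGraph A) (α : ℝ) (a b : Fin n → ℝ) : dS α A a b = dS α A b a := by
  unfold dS
  rw [Finset.sum_comm]
  exact Finset.sum_congr rfl fun j _ => Finset.sum_congr rfl fun i _ => by
    rw [Q_symm hG]; ring

/-- Spectral bounds: `α‖u‖² ≤ ⟨u, Qu⟩ ≤ ‖u‖²`. -/
lemma spectral (hG : IsGraph A) {α : ℝ} (hα : 0 ≤ α) (hα1 : α ≤ 1) (u : Fin n → ℝ) :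
    α * sq2 u ≤ ip u ((Qmat A α).mulVec u) ∧ ip u ((Qmat A α).mulVec u) ≤ sq2 u := by
  have hvalue : ip u ((Qmat A α).mulVec u)
      = (1 + α) / 2 * sq2 u
        - (1 - α) / 2 * ∑ i, ∑ j, u i * (A i j * u j / (Real.sqrt (deg A i) * Real.sqrt (deg A j))) := by
    unfold ip sq2
    simp only [mulVec_Q, mul_sub, Finset.mul_sum, Finset.sum_sub_distrib]
    congr 1
    · exact Finset.sum_congr rfl fun i _ => by ring
    · exact Finset.sum_congr rfl fun i _ => Finset.sum_congr rfl fun j _ => by ring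
  have hub : ∀ i j, u i * (A i j * u j / (Real.sqrt (deg A i) * Real.sqrt (deg A j)))
      ≤ A i j * ((u i ^ 2 / deg A i + u j ^ 2 / deg A j) / 2) := by
    intro i j
    have si := sqrt_deg_pos hG i
    have sj := sqrt_deg_pos hG j
    have ha := A_nonneg hG i j
    have e1 : u i * (A i j * u j / (Real.sqrt (deg A i) * Real.sqrt (deg A j)))
        = A i j * ((u i / Real.sqrt (deg A i)) * (u j / Real.sqrt (deg A j))) := by
      field_simp
    have e2 : (u i / Real.sqrt (deg A i)) ^ 2 = u i ^ 2 / deg A i := by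
      rw [div_pow, sq_sqrt_deg hG]
    have e3 : (u j / Real.sqrt (deg A j)) ^ 2 = u j ^ 2 / deg A j := by
      rw [div_pow, sq_sqrt_deg hG]
    rw [e1, ← e2, ← e3]
    nlinarith [mul_nonneg ha (sq_nonneg (u i / Real.sqrt (deg A i) - u j / Real.sqrt (deg A j)))]
  have hlb : ∀ i j, -(A i j * ((u i ^ 2 / deg A i + u j ^ 2 / deg A j) / 2))
      ≤ u i * (A i j * u j / (Real.sqrt (deg A i) * Real.sqrt (deg A j))) := by
    intro i j
    have si := sqrt_deg_pos hG i
    have sj := sqrt_deg_pos hG j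
    have ha := A_nonneg hG i j
    have e1 : u i * (A i j * u j / (Real.sqrt (deg A i) * Real.sqrt (deg A j)))
        = A i j * ((u i / Real.sqrt (deg A i)) * (u j / Real.sqrt (deg A j))) := by
      field_simp
    have e2 : (u i / Real.sqrt (deg A i)) ^ 2 = u i ^ 2 / deg A i := by
      rw [div_pow, sq_sqrt_deg hG]
    have e3 : (u j / Real.sqrt (deg A j)) ^ 2 = u j ^ 2 / deg A j := by
      rw [div_pow, sq_sqrt_deg hG]
    rw [e1, ← e2, ← e3]
    nlinarith [mul_nonneg ha (sq_nonneg (u i / Real.sqrt (deg A i) + u j / Real.sqrt (deg A j)))]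
  have hsum : ∑ i, ∑ j, A i j * ((u i ^ 2 / deg A i + u j ^ 2 / deg A j) / 2) = sq2 u := by
    have h1 : ∀ i j, A i j * ((u i ^ 2 / deg A i + u j ^ 2 / deg A j) / 2)
        = u i ^ 2 / deg A i / 2 * A i j + u j ^ 2 / deg A j / 2 * A i j := fun i j => by ring
    simp only [h1, Finset.sum_add_distrib]
    have t1 : ∑ i, ∑ j, u i ^ 2 / deg A i / 2 * A i j = ∑ i, u i ^ 2 / 2 := by
      apply Finset.sum_congr rfl; intro i _
      rw [← Finset.mul_sum]
      have hd := (hG.deg_pos i).ne'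
      show u i ^ 2 / deg A i / 2 * deg A i = u i ^ 2 / 2
      field_simp
    have t2 : ∑ i, ∑ j, u j ^ 2 / deg A j / 2 * A i j = ∑ j, u j ^ 2 / 2 := by
      rw [Finset.sum_comm]
      apply Finset.sum_congr rfl; intro j _
      rw [← Finset.mul_sum, colsum hG j]
      have hd := (hG.deg_pos j).ne'
      field_simp
    rw [t1, t2, ← Finset.sum_add_distrib]
    unfold sq2
    exact Finset.sum_congr rfl fun i _ => by ring
  have hBub : (∑ i, ∑ j, u i * (A i j * u j / (Real.sqrt (deg A i) * Real.sqrt (deg A j)))) ≤ sq2 u := by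
    rw [← hsum]
    exact Finset.sum_le_sum fun i _ => Finset.sum_le_sum fun j _ => hub i j
  have hBlb : -(sq2 u) ≤ ∑ i, ∑ j, u i * (A i j * u j / (Real.sqrt (deg A i) * Real.sqrt (deg A j))) := by
    rw [← hsum]
    calc -(∑ i, ∑ j, A i j * ((u i ^ 2 / deg A i + u j ^ 2 / deg A j) / 2))
        = ∑ i, ∑ j, -(A i j * ((u i ^ 2 / deg A i + u j ^ 2 / deg A j) / 2)) := by
          simp [Finset.sum_neg_distrib]
      _ ≤ _ := Finset.sum_le_sum fun i _ => Finset.sum_le_sum fun j _ => hlb i j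
  constructor
  · rw [hvalue]; nlinarith [sq2_nonneg u]
  · rw [hvalue]; nlinarith [sq2_nonneg u]


lemma fPR_eq (α : ℝ) (v : Fin n) (x : Fin n → ℝ) :
    fPR A α v x = 1 / 2 * dS α A x x - α * (x v / Real.sqrt (deg A v)) := by
  unfold fPR
  rw [show (∑ i, x i * (Qmat A α).mulVec x i) = ip x ((Qmat A α).mulVec x) from rfl,
    ip_mulVec]

lemma ip_gradf (α : ℝ) (v : Fin n) (y c : Fin n → ℝ) :
    ip (gradf A α v y) c = dS α A c y - α * (c v / Real.sqrt (deg A v)) := by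
  unfold ip gradf
  simp only [sub_mul, Finset.sum_sub_distrib]
  congr 1
  · unfold dS
    apply Finset.sum_congr rfl; intro i _
    rw [show (Qmat A α).mulVec y i = ∑ j, Qmat A α i j * y j from rfl, Finset.sum_mul]
    exact Finset.sum_congr rfl fun j _ => by ring
  · simp only [ite_mul, mul_ite, mul_zero, zero_mul, mul_assoc]
    rw [Finset.sum_ite_eq' Finset.univ v (fun i => α * (1 / Real.sqrt (deg A v) * c i))]
    simp only [Finset.mem_univ, if_true]
    ring

lemma dS_bil_left (α : ℝ) (p y b : Fin n → ℝ) :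
    dS α A (fun i => p i - y i) b = dS α A p b - dS α A y b := by
  unfold dS
  rw [← Finset.sum_sub_distrib]
  apply Finset.sum_congr rfl; intro i _
  rw [← Finset.sum_sub_distrib]
  exact Finset.sum_congr rfl fun j _ => by ring

lemma dS_bil_right (α : ℝ) (b p y : Fin n → ℝ) :
    dS α A b (fun i => p i - y i) = dS α A b p - dS α A b y := by
  unfold dS
  rw [← Finset.sum_sub_distrib]
  apply Finset.sum_congr rfl; intro i _
  rw [← Finset.sum_sub_distrib]
  exact Finset.sum_congr rfl fun j _ => by ring

lemma fPR_expand (hG : IsGraph A) (α : ℝ) (v : Fin n) (y p : Fin n → ℝ) :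
    fPR A α v p = fPR A α v y + ip (gradf A α v y) (fun i => p i - y i)
      + 1 / 2 * dS α A (fun i => p i - y i) (fun i => p i - y i) := by
  rw [fPR_eq, fPR_eq, ip_gradf]
  simp only [dS_bil_left, dS_bil_right]
  rw [dS_swap hG α p y]
  ring

lemma f_smooth (hG : IsGraph A) {α : ℝ} (hα : 0 ≤ α) (hα1 : α ≤ 1) (v : Fin n)
    (y p : Fin n → ℝ) :
    fPR A α v p ≤ fPR A α v y + ip (gradf A α v y) (fun i => p i - y i)
      + 1 / 2 * sq2 (fun i => p i - y i) := by
  rw [fPR_expand hG α v y p]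
  have h := (spectral hG hα hα1 (fun i => p i - y i)).2
  rw [ip_mulVec] at h
  linarith

lemma f_strong (hG : IsGraph A) {α : ℝ} (hα : 0 ≤ α) (hα1 : α ≤ 1) (v : Fin n)
    (y p : Fin n → ℝ) :
    fPR A α v y + ip (gradf A α v y) (fun i => p i - y i)
      + α / 2 * sq2 (fun i => p i - y i) ≤ fPR A α v p := by
  rw [fPR_expand hG α v y p]
  have h := (spectral hG hα hα1 (fun i => p i - y i)).1
  rw [ip_mulVec] at h
  linarith

lemma prox_scalar (τ w u : ℝ) (hτ : 0 ≤ τ) :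
    τ * |Real.sign w * max (|w| - τ) 0| + (w - Real.sign w * max (|w| - τ) 0) * (u - Real.sign w * max (|w| - τ) 0)
      ≤ τ * |u| := by
  rcases le_or_gt |w| τ with h | h
  · rw [max_eq_right (sub_nonpos.2 h)]
    simp only [mul_zero, abs_zero, sub_zero, add_zero, zero_add]
    calc w * u ≤ |w * u| := le_abs_self _
      _ = |w| * |u| := abs_mul w u
      _ ≤ τ * |u| := mul_le_mul_of_nonneg_right h (abs_nonneg u)
  · have hw : w ≠ 0 := by
      intro h0; rw [h0] at h; simp at h; linarith
    have hmax : max (|w| - τ) 0 = |w| - τ := max_eq_left (by linarith)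
    rw [hmax]
    rcases lt_or_gt_of_ne hw with hneg | hpos
    · rw [Real.sign_of_neg hneg, abs_of_neg hneg]
      have h1 : (-1 : ℝ) * (-w - τ) = w + τ := by ring
      rw [h1]
      have h2 : |w + τ| = -(w + τ) := abs_of_nonpos (by rw [abs_of_neg hneg] at h; linarith)
      rw [h2]
      have h3 : τ * -(w + τ) + (w - (w + τ)) * (u - (w + τ)) = τ * (-u) := by ring
      rw [h3]
      exact mul_le_mul_of_nonneg_left (neg_le_abs u) hτ
    · rw [Real.sign_of_pos hpos, abs_of_pos hpos]
      have h1 : (1 : ℝ) * (w - τ) = w - τ := by ring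
      rw [h1]
      have h2 : |w - τ| = w - τ := abs_of_nonneg (by rw [abs_of_pos hpos] at h; linarith)
      rw [h2]
      have h3 : τ * (w - τ) + (w - (w - τ)) * (u - (w - τ)) = τ * u := by ring
      rw [h3]
      exact mul_le_mul_of_nonneg_left (le_abs_self u) hτ

lemma prox_sum (hG : IsGraph A) {t : ℝ} (ht : 0 ≤ t) (w u : Fin n → ℝ) :
    t * l1w A (softT A t w)
      + ip (fun i => w i - softT A t w i) (fun i => u i - softT A t w i)
      ≤ t * l1w A u := by
  unfold l1w ip softT
  rw [Finset.mul_sum, Finset.mul_sum, ← Finset.sum_add_distrib]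
  apply Finset.sum_le_sum
  intro i _
  have hτ : 0 ≤ t * Real.sqrt (deg A i) := mul_nonneg ht (Real.sqrt_nonneg _)
  have := prox_scalar (t * Real.sqrt (deg A i)) (w i) (u i) hτ
  calc t * (Real.sqrt (deg A i) * |Real.sign (w i) * max (|w i| - t * Real.sqrt (deg A i)) 0|)
        + (w i - Real.sign (w i) * max (|w i| - t * Real.sqrt (deg A i)) 0)
          * (u i - Real.sign (w i) * max (|w i| - t * Real.sqrt (deg A i)) 0)
      = t * Real.sqrt (deg A i) * |Real.sign (w i) * max (|w i| - t * Real.sqrt (deg A i)) 0|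
        + (w i - Real.sign (w i) * max (|w i| - t * Real.sqrt (deg A i)) 0)
          * (u i - Real.sign (w i) * max (|w i| - t * Real.sqrt (deg A i)) 0) := by ring
    _ ≤ t * Real.sqrt (deg A i) * |u i| := this
    _ = t * (Real.sqrt (deg A i) * |u i|) := by ring

/-- Fundamental prox-gradient inequality. -/
lemma fundamental (hG : IsGraph A) {α ρ : ℝ} (hα : 0 < α) (hα1 : α < 1) (hρ : 0 < ρ)
    (v : Fin n) (y u : Fin n → ℝ) :
    Freg A α v (2 * ρ) (softT A (2 * α * ρ) (fun i => y i - gradf A α v y i))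
      + 1 / 2 * sq2 (fun i => softT A (2 * α * ρ) (fun j => y j - gradf A α v y j) i - y i)
      + ip (fun i => y i - softT A (2 * α * ρ) (fun j => y j - gradf A α v y j) i)
          (fun i => u i - y i)
      + α / 2 * sq2 (fun i => u i - y i)
      ≤ Freg A α v (2 * ρ) u := by
  set xp := softT A (2 * α * ρ) (fun j => y j - gradf A α v y j) with hxp
  set g := gradf A α v y with hg
  have ht : (0 : ℝ) ≤ 2 * α * ρ := by positivity
  have hsm : fPR A α v xp ≤ fPR A α v y + ip g (fun i => xp i - y i)
      + 1 / 2 * sq2 (fun i => xp i - y i) := f_smooth hG hα.le hα1.le v y xp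
  have hsc : fPR A α v y + ip g (fun i => u i - y i)
      + α / 2 * sq2 (fun i => u i - y i) ≤ fPR A α v u := f_strong hG hα.le hα1.le v y u
  have hpx := prox_sum hG ht (fun j => y j - g j) u
  have hkey : ip (fun i => (y i - g i) - xp i) (fun i => u i - xp i)
      = ip g (fun i => xp i - y i) - ip g (fun i => u i - y i)
        + ip (fun i => y i - xp i) (fun i => u i - y i) + sq2 (fun i => xp i - y i) := by
    unfold ip sq2
    simp only [← Finset.sum_add_distrib, ← Finset.sum_sub_distrib]
    exact Finset.sum_congr rfl fun i _ => by ring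
  rw [hkey] at hpx
  have e1 : Freg A α v (2 * ρ) u = fPR A α v u + 2 * α * ρ * l1w A u := by
    unfold Freg; ring
  have e2 : Freg A α v (2 * ρ) xp = fPR A α v xp + 2 * α * ρ * l1w A xp := by
    unfold Freg; ring
  rw [e1, e2]
  linarith


lemma Freg_zero (α ρ' : ℝ) (v : Fin n) : Freg A α v ρ' 0 = 0 := by
  unfold Freg fPR l1w
  simp [Matrix.mulVec_zero]

lemma Freg_lb (hG : IsGraph A) {α ρ' : ℝ} (hα : 0 < α) (hα1 : α < 1) (hρ' : 0 ≤ ρ')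
    (v : Fin n) (u : Fin n → ℝ) :
    α / 2 * sq2 u - α * _root_.enorm u ≤ Freg A α v ρ' u := by
  have hspec := (spectral hG hα.le hα1.le u).1
  have hl1 : 0 ≤ l1w A u :=
    Finset.sum_nonneg fun i _ => mul_nonneg (Real.sqrt_nonneg _) (abs_nonneg _)
  have hv : u v / Real.sqrt (deg A v) ≤ _root_.enorm u := by
    calc u v / Real.sqrt (deg A v) ≤ |u v / Real.sqrt (deg A v)| := le_abs_self _
      _ = |u v| / Real.sqrt (deg A v) := by
          rw [abs_div, abs_of_pos (sqrt_deg_pos hG v)]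
      _ ≤ |u v| := div_le_self (abs_nonneg _) (one_le_sqrt_deg hG v)
      _ ≤ _root_.enorm u := abs_coord_le u v
  have h1 : α * (u v / Real.sqrt (deg A v)) ≤ α * _root_.enorm u :=
    mul_le_mul_of_nonneg_left hv hα.le
  have h2 : 0 ≤ α * ρ' * l1w A u := mul_nonneg (mul_nonneg hα.le hρ') hl1
  unfold Freg fPR
  rw [show (∑ i, u i * (Qmat A α).mulVec u i) = ip u ((Qmat A α).mulVec u) from rfl]
  linarith

/-- Uniform bound `‖y k‖ ≤ 8` along FISTA iterations. -/
lemma ynorm_bound (hG : IsGraph A) {α ρ : ℝ} (hα : 0 < α) (hα1 : α < 1) (hρ : 0 < ρ)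
    (v : Fin n) (xB : Fin n → ℝ)
    (hxB : ∀ z, Freg A α v (2 * ρ) xB ≤ Freg A α v (2 * ρ) z)
    (x y : ℕ → Fin n → ℝ) (β : ℝ)
    (hβ : β = (1 - Real.sqrt α) / (1 + Real.sqrt α))
    (hx0 : x 0 = 0) (hy0 : y 0 = 0)
    (hxs : ∀ k, x (k + 1) = softT A (2 * α * ρ) (fun i => y k i - gradf A α v (y k) i))
    (hys : ∀ k, y (k + 1) = fun i => x (k + 1) i + β * (x (k + 1) i - x k i)) :
    ∀ k, _root_.enorm (y k) ≤ 8 := by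
  set s := Real.sqrt α with hs
  have hs0 : 0 < s := Real.sqrt_pos.2 hα
  have hs2 : s ^ 2 = α := Real.sq_sqrt hα.le
  have hs1 : s < 1 := by nlinarith
  have hβ1 : (1 + s) * β = 1 - s := by
    rw [hβ]; field_simp
  set Fr : (Fin n → ℝ) → ℝ := fun z => Freg A α v (2 * ρ) z with hFr
  set ζ : ℕ → Fin n → ℝ := fun k i => (1 + s) * y k i - x k i with hζ
  set E : ℕ → ℝ := fun k => Fr (x k) - Fr xB + 1 / 2 * sq2 (fun i => ζ k i - s * xB i)
    with hE
  have hzeta : ∀ k i, ζ (k + 1) i = x (k + 1) i - x k i + s * x k i := by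
    intro k i
    simp only [hζ, hys k]
    calc (1 + s) * (x (k + 1) i + β * (x (k + 1) i - x k i)) - x (k + 1) i
        = s * x (k + 1) i + (1 + s) * β * (x (k + 1) i - x k i) := by ring
      _ = x (k + 1) i - x k i + s * x k i := by rw [hβ1]; ring
  have hEnn : ∀ k, 0 ≤ E k := by
    intro k
    have h1 := hxB (x k)
    have h2 := sq2_nonneg (fun i => ζ k i - s * xB i)
    simp only [hE, hFr]
    linarith
  have hstep : ∀ k, E (k + 1) ≤ E k := by
    intro k
    have h1 := fundamental hG hα hα1 hρ v (y k) (x k)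
    have h2 := fundamental hG hα hα1 hρ v (y k) xB
    rw [← hxs k] at h1 h2
    have hid : 1 / 2 * sq2 (fun i => x (k + 1) i - y k i)
        + ((1 - s) * ip (fun i => y k i - x (k + 1) i) (fun i => x k i - y k i)
           + s * ip (fun i => y k i - x (k + 1) i) (fun i => xB i - y k i))
        + α / 2 * ((1 - s) * sq2 (fun i => x k i - y k i)
           + s * sq2 (fun i => xB i - y k i))
        = 1 / 2 * sq2 (fun i => (x (k + 1) i - x k i + s * x k i) - s * xB i)
          - (1 - s) * (1 / 2 * sq2 (fun i => ((1 + s) * y k i - x k i) - s * xB i))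
          + (s - s * α) / 2 * sq2 (fun i => x k i - y k i) := by
      rw [← hs2]
      simp only [sq2, ip, Finset.mul_sum, ← Finset.sum_add_distrib, ← Finset.sum_sub_distrib]
      exact Finset.sum_congr rfl fun i _ => by ring
    have hζ1 : (fun i => ζ (k + 1) i - s * xB i)
        = fun i => (x (k + 1) i - x k i + s * x k i) - s * xB i := by
      funext i; rw [hzeta k i]
    have hζ0 : (fun i => ζ k i - s * xB i)
        = fun i => ((1 + s) * y k i - x k i) - s * xB i := by
      funext i; simp only [hζ]
    have c1 := mul_le_mul_of_nonneg_left h1 (by linarith : (0:ℝ) ≤ 1 - s)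
    have c2 := mul_le_mul_of_nonneg_left h2 hs0.le
    have hr1 : 0 ≤ sq2 (fun i => x k i - y k i) := sq2_nonneg _
    have hab : Fr xB ≤ Fr (x k) := hxB (x k)
    have hZ : 0 ≤ sq2 (fun i => ζ k i - s * xB i) := sq2_nonneg _
    simp only [hE, hFr, hζ1, hζ0]
    rw [hζ0] at hZ
    nlinarith [c1, c2, hid, hr1, hab, hZ, hs0, hs1,
      mul_nonneg (mul_nonneg hs0.le (by linarith : (0:ℝ) ≤ 1 - α)) hr1,
      mul_nonneg hs0.le (sub_nonneg.2 hab), mul_nonneg hs0.le hZ]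
  have hEdec : ∀ k, E k ≤ E 0 := by
    intro k
    induction k with
    | zero => exact le_refl _
    | succ k ih => exact le_trans (hstep k) ih
  have hFr0 : Fr 0 = 0 := Freg_zero α (2 * ρ) v
  have hFrB0 : Fr xB ≤ 0 := by rw [← hFr0]; exact hxB 0
  have hlbB := Freg_lb hG hα hα1 (by linarith : (0:ℝ) ≤ 2 * ρ) v xB
  have hNB : _root_.enorm xB ≤ 2 := by
    have h1 : α / 2 * sq2 xB - α * _root_.enorm xB ≤ 0 := le_trans hlbB hFrB0
    have h2 : sq2 xB = _root_.enorm xB ^ 2 := (enorm_sq xB).symm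
    by_contra hcon
    push_neg at hcon
    have hN0 : 0 < _root_.enorm xB := by linarith
    nlinarith [mul_pos (mul_pos hα hN0) (by linarith : (0:ℝ) < _root_.enorm xB - 2)]
  have hE0 : E 0 ≤ 2 * α := by
    have hz : (fun i => ζ 0 i - s * xB i) = fun i => -(s * xB i) := by
      funext i
      simp only [hζ]
      rw [show y 0 i = 0 from by rw [hy0]; rfl, show x 0 i = 0 from by rw [hx0]; rfl]
      ring
    have hsq : sq2 (fun i => -(s * xB i)) = s ^ 2 * sq2 xB := by
      unfold sq2; rw [Finset.mul_sum]
      exact Finset.sum_congr rfl fun i _ => by ring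
    have hsqB : sq2 xB = _root_.enorm xB ^ 2 := (enorm_sq xB).symm
    simp only [hE, hz, hsq, hx0, hFr0, hs2]
    nlinarith [enorm_nonneg xB]
  intro k
  have hEk : E k ≤ 2 * α := le_trans (hEdec k) hE0
  -- (a) ‖ζ k − s xB‖ ≤ 2 s
  have ha : _root_.enorm (fun i => ζ k i - s * xB i) ≤ 2 * s := by
    have h1 : sq2 (fun i => ζ k i - s * xB i) ≤ 4 * s ^ 2 := by
      have := hxB (x k)
      simp only [hE, hFr] at hEk
      nlinarith
    have h2 := Real.sqrt_le_sqrt h1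
    rw [show (4 : ℝ) * s ^ 2 = (2 * s) ^ 2 from by ring, Real.sqrt_sq (by linarith)] at h2
    exact h2
  -- (b) ‖ζ k‖ ≤ 4 s
  have hb : _root_.enorm (ζ k) ≤ 4 * s := by
    have ht := enorm_triangle (fun i => ζ k i - s * xB i) (fun i => s * xB i)
    have he : (fun i => (ζ k i - s * xB i) + s * xB i) = ζ k := by funext i; ring
    rw [he] at ht
    have hsm : _root_.enorm (fun i => s * xB i) = s * _root_.enorm xB := enorm_smul s hs0.le xB
    rw [hsm] at ht
    nlinarith
  -- (c) ‖x k‖ ≤ 33/10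
  have hc : _root_.enorm (x k) ≤ 33 / 10 := by
    have h1 : Fr (x k) ≤ 2 * α := by
      have := sq2_nonneg (fun i => ζ k i - s * xB i)
      simp only [hE, hFr] at hEk
      simp only [hFr]
      linarith
    have h2 := Freg_lb hG hα hα1 (by linarith : (0:ℝ) ≤ 2 * ρ) v (x k)
    have h3 : sq2 (x k) = _root_.enorm (x k) ^ 2 := (enorm_sq (x k)).symm
    have h4 : α / 2 * _root_.enorm (x k) ^ 2 - α * _root_.enorm (x k) ≤ 2 * α := by
      rw [← h3]; exact le_trans h2 h1
    nlinarith [h4, hα, enorm_nonneg (x k),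
      mul_nonneg hα.le (sq_nonneg (_root_.enorm (x k) - 33 / 10))]
  -- combine
  have hd : (1 + s) * _root_.enorm (y k) ≤ 4 * s + 33 / 10 := by
    have ht := enorm_triangle (ζ k) (x k)
    have he : (fun i => ζ k i + x k i) = fun i => (1 + s) * y k i := by
      funext i; simp only [hζ]; ring
    rw [he, enorm_smul (1 + s) (by linarith) (y k)] at ht
    linarith
  nlinarith [hd, hs0, enorm_nonneg (y k)]

end FBC

/-- Boundary confinement under a no-percolation condition: running FISTA
(η = 1, β = (1−√α)/(1+√α), x₋₁ = x₀ = 0) on `F_{2ρ} = f + g_B` with `α ∈ (0,1)`, if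
`S ⊇ S_B` (and `S` contains the seed) and every exterior vertex `i` satisfies
`|N({i}) ∩ ∂S| / d_i ≤ (αρ/(2(1−α)))²·d_i·d_min∂S`, then `supp(x_k) ⊆ S ∪ ∂S` for all `k`. -/
theorem fista_boundary_confinement
    {n : ℕ} (A : Matrix (Fin n) (Fin n) ℝ) (hG : IsGraph A)
    (α ρ : ℝ) (hα : 0 < α) (hα1 : α < 1) (hρ : 0 < ρ) (v : Fin n)
    (xB : Fin n → ℝ)
    (hxB : ∀ z, Freg A α v (2 * ρ) xB ≤ Freg A α v (2 * ρ) z)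
    (x y : ℕ → Fin n → ℝ) (β : ℝ)
    (hβ : β = (1 - Real.sqrt α) / (1 + Real.sqrt α))
    (hx0 : x 0 = 0) (hy0 : y 0 = 0)
    (hxs : ∀ k, x (k + 1) = softT A (2 * α * ρ) (fun i => y k i - gradf A α v (y k) i))
    (hys : ∀ k, y (k + 1) = fun i => x (k + 1) i + β * (x (k + 1) i - x k i))
    (S : Set (Fin n))
    (hSB : Function.support xB ⊆ S)
    (hseed : v ∈ S)
    -- no-percolation condition on exterior vertices, with d_min∂S = inf of degrees on ∂S
    (hexp : ∀ i : Fin n, i ∉ S ∪ bdry A S →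
      ((nbr A i ∩ bdry A S).ncard : ℝ) / deg A i ≤
        (α * ρ / (2 * (1 - α))) ^ 2 * deg A i * sInf (deg A '' bdry A S)) :
    ∀ k : ℕ, Function.support (x k) ⊆ S ∪ bdry A S := by

  classical
  have hy8 := FBC.ynorm_bound hG hα hα1 hρ v xB hxB x y β hβ hx0 hy0 hxs hys
  set C : ℝ := α * ρ / (2 * (1 - α)) with hC
  have hC0 : 0 < C := by
    apply div_pos (mul_pos hα hρ); linarith
  have key : ∀ k, Function.support (x k) ⊆ S ∪ bdry A S
      ∧ Function.support (y k) ⊆ S ∪ bdry A S := by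
    intro k
    induction k with
    | zero =>
      constructor
      · intro i hi; rw [Function.mem_support, hx0] at hi; simp at hi
      · intro i hi; rw [Function.mem_support, hy0] at hi; simp at hi
    | succ k ih =>
      have hxk1 : Function.support (x (k + 1)) ⊆ S ∪ bdry A S := by
        intro i hi
        by_contra hiT
        apply Function.mem_support.1 hi
        have hyki : y k i = 0 := by
          by_contra h
          exact hiT (ih.2 (Function.mem_support.2 h))
        have hiv : i ≠ v := by
          intro h; exact hiT (Or.inl (h ▸ hseed))
        have hiS : i ∉ S := fun h => hiT (Or.inl h)
        have hib : i ∉ bdry A S := fun h => hiT (Or.inr h)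
        set B : ℝ := ∑ j, A i j * y k j / (Real.sqrt (deg A i) * Real.sqrt (deg A j))
          with hB
        have hw : y k i - gradf A α v (y k) i = (1 - α) / 2 * B := by
          rw [hB]
          unfold gradf
          rw [FBC.mulVec_Q, if_neg hiv, hyki]
          ring
        set T' : Finset (Fin n) :=
          Finset.univ.filter (fun j => A i j ≠ 0 ∧ j ∈ bdry A S) with hT'
        have hvanish : ∀ j ∈ Finset.univ, j ∉ T' →
            A i j * y k j / (Real.sqrt (deg A i) * Real.sqrt (deg A j)) = 0 := by
          intro j _ hj
          rw [hT', Finset.mem_filter] at hj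
          push_neg at hj
          by_cases hA : A i j = 0
          · rw [hA]; ring
          · have hjb : j ∉ bdry A S := hj (Finset.mem_univ j) hA
            have hjS : j ∉ S := by
              intro hjS
              exact hib ⟨hiS, j, hjS, hA⟩
            have hyj : y k j = 0 := by
              by_contra h
              rcases ih.2 (Function.mem_support.2 h) with h' | h'
              exacts [hjS h', hjb h']
            rw [hyj]; ring
        have hBeq : B = ∑ j ∈ T', A i j * y k j / (Real.sqrt (deg A i) * Real.sqrt (deg A j)) := by
          rw [hB]
          exact (Finset.sum_subset (Finset.subset_univ T') hvanish).symm
        by_cases hTe : T' = ∅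
        · have hB0 : B = 0 := by rw [hBeq, hTe, Finset.sum_empty]
          rw [hxs k]
          simp only [softT]
          rw [hw, hB0, mul_zero, Real.sign_zero, zero_mul]
        · have hTne : T'.Nonempty := Finset.nonempty_iff_ne_empty.2 hTe
          obtain ⟨j₀, hj₀⟩ := hTne
          have hj₀b : j₀ ∈ bdry A S := (Finset.mem_filter.1 hj₀).2.2
          set dm : ℝ := sInf (deg A '' bdry A S) with hdm
          have hbne : (deg A '' bdry A S).Nonempty := ⟨deg A j₀, ⟨j₀, hj₀b, rfl⟩⟩
          have hbfin : (deg A '' bdry A S).Finite := Set.toFinite _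
          have hdm_mem : dm ∈ deg A '' bdry A S := Set.Nonempty.csInf_mem hbne hbfin
          have hdm0 : 0 < dm := by
            obtain ⟨j₁, _, hj₁⟩ := hdm_mem
            rw [← hj₁]; exact hG.deg_pos j₁
          have hdm_le : ∀ j ∈ T', dm ≤ deg A j := by
            intro j hj
            exact csInf_le hbfin.bddBelow ⟨j, (Finset.mem_filter.1 hj).2.2, rfl⟩
          have hsetEq : nbr A i ∩ bdry A S = ↑T' := by
            ext j
            simp [hT', nbr]
          have hcard : (T'.card : ℝ) ≤ C ^ 2 * deg A i ^ 2 * dm := by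
            have h := hexp i hiT
            rw [hsetEq, Set.ncard_coe_finset, div_le_iff₀ (hG.deg_pos i)] at h
            calc (T'.card : ℝ) ≤ C ^ 2 * deg A i * dm * deg A i := h
              _ = C ^ 2 * deg A i ^ 2 * dm := by ring
          have hsum1 : ∑ j ∈ T', (1 / Real.sqrt (deg A j)) ^ 2 ≤ T'.card * (1 / dm) := by
            have hle : ∀ j ∈ T', (1 / Real.sqrt (deg A j)) ^ 2 ≤ 1 / dm := by
              intro j hj
              rw [div_pow, one_pow, FBC.sq_sqrt_deg hG]
              exact one_div_le_one_div_of_le hdm0 (hdm_le j hj)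
            calc ∑ j ∈ T', (1 / Real.sqrt (deg A j)) ^ 2
                ≤ T'.card • (1 / dm) := Finset.sum_le_card_nsmul T' _ _ hle
              _ = T'.card * (1 / dm) := nsmul_eq_mul _ _
          have hsum2 : ∑ j ∈ T', |y k j| ^ 2 ≤ 64 := by
            calc ∑ j ∈ T', |y k j| ^ 2
                ≤ ∑ j, |y k j| ^ 2 := Finset.sum_le_sum_of_subset_of_nonneg
                  (Finset.subset_univ T') (fun j _ _ => sq_nonneg _)
              _ = FBC.sq2 (y k) := Finset.sum_congr rfl fun j _ => sq_abs _
              _ = _root_.enorm (y k) ^ 2 := (FBC.enorm_sq _).symm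
              _ ≤ 64 := by nlinarith [hy8 k, FBC.enorm_nonneg (y k)]
          have h64 : Real.sqrt (∑ j ∈ T', |y k j| ^ 2) ≤ 8 := by
            have h := Real.sqrt_le_sqrt hsum2
            rwa [show (64 : ℝ) = 8 ^ 2 by norm_num, Real.sqrt_sq (by norm_num : (0:ℝ) ≤ 8)] at h
          have hc2 : Real.sqrt (∑ j ∈ T', (1 / Real.sqrt (deg A j)) ^ 2) ≤ C * deg A i := by
            have h1 : ∑ j ∈ T', (1 / Real.sqrt (deg A j)) ^ 2 ≤ C ^ 2 * deg A i ^ 2 := by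
              calc ∑ j ∈ T', (1 / Real.sqrt (deg A j)) ^ 2
                  ≤ T'.card * (1 / dm) := hsum1
                _ ≤ (C ^ 2 * deg A i ^ 2 * dm) * (1 / dm) :=
                    mul_le_mul_of_nonneg_right hcard (by positivity)
                _ = C ^ 2 * deg A i ^ 2 := by field_simp
            have h := Real.sqrt_le_sqrt h1
            rwa [show C ^ 2 * deg A i ^ 2 = (C * deg A i) ^ 2 by ring,
              Real.sqrt_sq (mul_nonneg hC0.le (hG.deg_pos i).le)] at h
          have hcs := Real.sum_mul_le_sqrt_mul_sqrt T' (fun j => |y k j|)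
            (fun j => 1 / Real.sqrt (deg A j))
          have habs : |B| ≤ (1 / Real.sqrt (deg A i))
              * ∑ j ∈ T', |y k j| * (1 / Real.sqrt (deg A j)) := by
            rw [hBeq]
            calc |∑ j ∈ T', A i j * y k j / (Real.sqrt (deg A i) * Real.sqrt (deg A j))|
                ≤ ∑ j ∈ T', |A i j * y k j / (Real.sqrt (deg A i) * Real.sqrt (deg A j))| :=
                  Finset.abs_sum_le_sum_abs _ _
              _ = ∑ j ∈ T', (1 / Real.sqrt (deg A i)) * (|y k j| * (1 / Real.sqrt (deg A j))) := by
                  apply Finset.sum_congr rfl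
                  intro j hj
                  have hA1 : A i j = 1 :=
                    (hG.zero_one i j).resolve_left (Finset.mem_filter.1 hj).2.1
                  have hsi := FBC.sqrt_deg_pos hG i
                  have hsj := FBC.sqrt_deg_pos hG j
                  rw [hA1, one_mul, abs_div, abs_of_pos (mul_pos hsi hsj)]
                  field_simp
              _ = (1 / Real.sqrt (deg A i)) * ∑ j ∈ T', |y k j| * (1 / Real.sqrt (deg A j)) :=
                  (Finset.mul_sum _ _ _).symm
          have hBb : |B| ≤ 8 * C * Real.sqrt (deg A i) := by
            have h1 : ∑ j ∈ T', |y k j| * (1 / Real.sqrt (deg A j)) ≤ 8 * (C * deg A i) :=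
              le_trans hcs (mul_le_mul h64 hc2 (Real.sqrt_nonneg _) (by norm_num))
            calc |B| ≤ (1 / Real.sqrt (deg A i))
                  * ∑ j ∈ T', |y k j| * (1 / Real.sqrt (deg A j)) := habs
              _ ≤ (1 / Real.sqrt (deg A i)) * (8 * (C * deg A i)) :=
                  mul_le_mul_of_nonneg_left h1 (by positivity)
              _ = 8 * C * Real.sqrt (deg A i) := by
                  rw [show deg A i = Real.sqrt (deg A i) ^ 2 from (FBC.sq_sqrt_deg hG i).symm]
                  have := FBC.sqrt_deg_pos hG i
                  field_simp
                  ring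
                  rw [Real.sqrt_sq this.le]
          have hwb : |y k i - gradf A α v (y k) i| ≤ 2 * α * ρ * Real.sqrt (deg A i) := by
            rw [hw, abs_mul, abs_of_nonneg (show (0:ℝ) ≤ (1 - α) / 2 by linarith)]
            calc (1 - α) / 2 * |B| ≤ (1 - α) / 2 * (8 * C * Real.sqrt (deg A i)) :=
                mul_le_mul_of_nonneg_left hBb (by linarith)
              _ = 2 * α * ρ * Real.sqrt (deg A i) := by
                  rw [hC]
                  have h1α : (1 : ℝ) - α ≠ 0 := by linarith
                  field_simp
                  ring
          rw [hxs k]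
          simp only [softT]
          rw [max_eq_right (sub_nonpos.2 hwb), mul_zero]
      refine ⟨hxk1, ?_⟩
      intro i hi
      by_contra hiT
      apply Function.mem_support.1 hi
      have h1 : x (k + 1) i = 0 := by
        by_contra h; exact hiT (hxk1 (Function.mem_support.2 h))
      have h2 : x k i = 0 := by
        by_contra h; exact hiT (ih.1 (Function.mem_support.2 h))
      rw [hys k]
      simp [h1, h2]
  exact fun k => (key k).1
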